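/- arXiv:1710.07540 — 3 statements merged into one kernel-verified Lean document; each statement's English description precedes it below -/
import Mathlib

section
/- Let M, E be compact metric spaces and let mᵏ, m be Borel probability measures on M × E with mᵏ → m weak* and with common projection μ on M. Let Hₖ, H : M × E → M × E be measurable maps of the form Hₖ(x, v) = (x, hₖ(x, v)) and H(x, v) = (x, h(x, v)) such that hₖ → h uniformly on M × E and, for each fixed x, v ↦ h(x, v) is continuous, and x ↦ h(x, ·) satisfies the Lusin condition (for every ε > 0 there is compact K ⊆ M with μ(K) > 1 − ε on which H is continuous). Then (Hₖ)∗mᵏ → H∗m in the weak* topology. -/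
open MeasureTheory Filter Set

/-- If two integrable functions agree on a set `s` and their difference is uniformly
bounded by `D`, then their integrals differ by at most `D * ν sᶜ`. -/
lemma aux_int_diff {X : Type*} [MeasurableSpace X] (ν : Measure X) [IsFiniteMeasure ν]
    {f g : X → ℝ} (hf : Integrable f ν) (hg : Integrable g ν)
    {s : Set X} (heq : ∀ p ∈ s, f p = g p)
    {D : ℝ} (hbound : ∀ p, |f p - g p| ≤ D) :
    |∫ p, f p ∂ν - ∫ p, g p ∂ν| ≤ D * (ν sᶜ).toReal := by
  rw [← integral_sub hf hg]
  have hrw : ∫ p in sᶜ, (f p - g p) ∂ν = ∫ p, (f p - g p) ∂ν := by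
    apply setIntegral_eq_integral_of_forall_compl_eq_zero
    intro x hx
    have hx' : x ∈ s := by simpa using hx
    rw [heq x hx']; ring
  rw [← hrw]
  have := norm_setIntegral_le_of_norm_le_const_ae (μ := ν) (s := sᶜ)
    (f := fun p => f p - g p) (C := D) (measure_lt_top ν sᶜ)
    (ae_of_all _ fun x => hbound x)
  simpa [measureReal_def] using this

/-- If `mᵏ → m` weak* with common projection `μ`, and fiberwise maps `Hₖ → H`
uniformly with `H` continuous on `K × E` for compact `K` of almost full measure,
then `(Hₖ)₊mᵏ → H₊m` weak*. -/
theorem stmt_5 {M E : Type*} [MetricSpace M] [CompactSpace M]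
    [MetricSpace E] [CompactSpace E]
    [MeasurableSpace M] [BorelSpace M] [MeasurableSpace E] [BorelSpace E]
    (μ : Measure M) [IsProbabilityMeasure μ]
    (mk : ℕ → Measure (M × E)) (m : Measure (M × E))
    [∀ k, IsProbabilityMeasure (mk k)] [IsProbabilityMeasure m]
    (hproj : ∀ k, (mk k).map Prod.fst = μ) (hprojm : m.map Prod.fst = μ)
    (hweak : ∀ ψ : C(M × E, ℝ),
      Tendsto (fun k => ∫ p, ψ p ∂(mk k)) atTop (nhds (∫ p, ψ p ∂m)))
    (hk : ℕ → M → E → E) (h : M → E → E)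
    (hkmeas : ∀ k, Measurable fun p : M × E => (p.1, hk k p.1 p.2))
    (hmeas : Measurable fun p : M × E => (p.1, h p.1 p.2))
    (hunif : ∀ ε : ℝ, 0 < ε → ∃ N, ∀ k ≥ N, ∀ p : M × E,
      dist ((p.1, hk k p.1 p.2) : M × E) (p.1, h p.1 p.2) < ε)
    (hfibercont : ∀ x, Continuous fun v => h x v)
    (hlusin : ∀ ε : ℝ, 0 < ε → ∃ K : Set M, IsCompact K ∧
      1 - ENNReal.ofReal ε < μ K ∧
      ContinuousOn (fun p : M × E => ((p.1, h p.1 p.2) : M × E))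
        (K ×ˢ (univ : Set E))) :
    ∀ ψ : C(M × E, ℝ),
      Tendsto (fun k => ∫ p, ψ ((p.1, hk k p.1 p.2) : M × E) ∂(mk k)) atTop
        (nhds (∫ p, ψ ((p.1, h p.1 p.2) : M × E) ∂m)) := by
  intro ψ
  set C : ℝ := ‖ψ‖ with hC
  have hC0 : 0 ≤ C := norm_nonneg ψ
  have hψb : ∀ q : M × E, |ψ q| ≤ C := fun q => ψ.norm_coe_le_norm q
  -- the target function G
  set G : M × E → ℝ := fun p => ψ (p.1, h p.1 p.2) with hG
  have hGmeas : Measurable G := ψ.continuous.measurable.comp hmeas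
  have hGint : ∀ (ν : Measure (M × E)) [IsProbabilityMeasure ν], Integrable G ν := by
    intro ν _
    refine (integrable_const C).mono' hGmeas.aestronglyMeasurable ?_
    exact ae_of_all _ fun p => hψb _
  have hFint : ∀ k, Integrable (fun p : M × E => ψ (p.1, hk k p.1 p.2)) (mk k) := by
    intro k
    refine (integrable_const C).mono'
      (ψ.continuous.measurable.comp (hkmeas k)).aestronglyMeasurable ?_
    exact ae_of_all _ fun p => hψb _
  rw [Metric.tendsto_atTop]
  intro ε hε
  have hε5 : 0 < ε / 5 := by linarith
  -- uniform continuity of ψ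
  obtain ⟨δ, hδ, hδψ⟩ := Metric.uniformContinuous_iff.mp
    (CompactSpace.uniformContinuous_of_continuous ψ.continuous) (ε / 5) hε5
  -- Lusin set
  have hε' : 0 < ε / 5 / (2 * C + 1) := by positivity
  obtain ⟨K, hKcomp, hKmeas', hKcont⟩ := hlusin _ hε'
  set s : Set (M × E) := K ×ˢ (univ : Set E) with hs
  have hsclosed : IsClosed s := hKcomp.isClosed.prod isClosed_univ
  -- measure of the complement of s under any measure projecting to μ
  have hμKc : (μ Kᶜ).toReal ≤ ε / 5 / (2 * C + 1) := by
    have hcompl : μ Kᶜ ≤ ENNReal.ofReal (ε / 5 / (2 * C + 1)) := by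
      rw [measure_compl hKcomp.isClosed.measurableSet (measure_ne_top μ K)]
      rw [measure_univ]
      rw [tsub_le_iff_right]
      rcases le_total (ENNReal.ofReal (ε / 5 / (2 * C + 1))) 1 with he | he
      · calc (1 : ENNReal) = (1 - ENNReal.ofReal (ε / 5 / (2 * C + 1)))
              + ENNReal.ofReal (ε / 5 / (2 * C + 1)) := (tsub_add_cancel_of_le he).symm
          _ ≤ ENNReal.ofReal (ε / 5 / (2 * C + 1)) + μ K := by
              rw [add_comm]
              exact add_le_add le_rfl hKmeas'.le
      · exact le_trans he (le_add_right le_rfl)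
    exact ENNReal.toReal_le_of_le_ofReal hε'.le hcompl
  have hνsc : ∀ (ν : Measure (M × E)), ν.map Prod.fst = μ →
      (ν sᶜ).toReal ≤ ε / 5 / (2 * C + 1) := by
    intro ν hν
    have hsc : sᶜ = Prod.fst ⁻¹' Kᶜ := by
      ext p; simp [hs, Set.mem_prod]
    rw [hsc, ← Measure.map_apply measurable_fst hKcomp.isClosed.measurableSet.compl, hν]
    exact hμKc
  -- Tietze extension of G restricted to s, then clamp
  have hcont_s : ContinuousOn G s := ψ.continuous.comp_continuousOn hKcont
  obtain ⟨g₀, hg₀⟩ := ContinuousMap.exists_restrict_eq (Y := ℝ) hsclosed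
    ⟨s.restrict G, hcont_s.restrict⟩
  have hg₀eq : ∀ p ∈ s, g₀ p = G p := by
    intro p hp
    have := congrFun (congrArg DFunLike.coe hg₀) ⟨p, hp⟩
    exact this
  set g : C(M × E, ℝ) := ⟨fun p => max (-C) (min C (g₀ p)), by
    exact (continuous_const.max (continuous_const.min g₀.continuous))⟩ with hgdef
  have hgb : ∀ p, |g p| ≤ C := by
    intro p
    rw [abs_le]
    constructor
    · exact le_max_left _ _
    · exact max_le (by linarith) (min_le_left _ _)
  have hgeq : ∀ p ∈ s, g p = G p := by
    intro p hp
    have h1 := hg₀eq p hp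
    have h2 := hψb (p.1, h p.1 p.2)
    rw [abs_le] at h2
    show max (-C) (min C (g₀ p)) = G p
    rw [h1]
    rw [min_eq_right h2.2, max_eq_right h2.1]
  have hgint : ∀ (ν : Measure (M × E)) [IsProbabilityMeasure ν], Integrable (⇑g) ν := by
    intro ν _
    refine (integrable_const C).mono' g.continuous.measurable.aestronglyMeasurable ?_
    exact ae_of_all _ fun p => hgb p
  -- weak convergence for g
  obtain ⟨N₁, hN₁⟩ := (Metric.tendsto_atTop.mp (hweak g)) (ε / 5) hε5
  -- uniform convergence for δ
  obtain ⟨N₂, hN₂⟩ := hunif δ hδ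
  refine ⟨max N₁ N₂, fun k hkN => ?_⟩
  have hk1 : k ≥ N₁ := le_trans (le_max_left _ _) hkN
  have hk2 : k ≥ N₂ := le_trans (le_max_right _ _) hkN
  -- Term 1: |∫ Fₖ dmᵏ - ∫ G dmᵏ| ≤ ε/5
  have T1 : |(∫ p, ψ (p.1, hk k p.1 p.2) ∂(mk k)) - ∫ p, G p ∂(mk k)| ≤ ε / 5 := by
    rw [← integral_sub (hFint k) (hGint (mk k))]
    have := norm_integral_le_of_norm_le_const (μ := mk k)
      (f := fun p : M × E => ψ (p.1, hk k p.1 p.2) - G p) (C := ε / 5)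
      (ae_of_all _ fun p => by
        have := hδψ (hN₂ k hk2 p)
        rw [Real.dist_eq] at this
        simpa [Real.norm_eq_abs, hG] using this.le)
    simpa [measure_univ] using this
  -- Term 2: |∫ G dmᵏ - ∫ g dmᵏ| ≤ 2C * ε'
  have hbnd : ∀ (p : M × E), |G p - g p| ≤ 2 * C := by
    intro p
    have h1 := hψb (p.1, h p.1 p.2)
    have h2 := hgb p
    calc |G p - g p| ≤ |G p| + |g p| := abs_sub _ _
      _ ≤ 2 * C := by simp only [hG] at h1 ⊢; linarith
  have T2 : |(∫ p, G p ∂(mk k)) - ∫ p, g p ∂(mk k)| ≤ ε / 5 := by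
    have := aux_int_diff (mk k) (hGint (mk k)) (hgint (mk k))
      (fun p hp => (hgeq p hp).symm) hbnd
    refine le_trans this ?_
    have h2 := hνsc (mk k) (hproj k)
    calc 2 * C * ((mk k) sᶜ).toReal ≤ (2 * C + 1) * (ε / 5 / (2 * C + 1)) := by
          apply mul_le_mul (by linarith) h2 ENNReal.toReal_nonneg (by linarith)
      _ = ε / 5 := by field_simp
  -- Term 3: |∫ g dmᵏ - ∫ g dm| < ε/5
  have T3 : |(∫ p, g p ∂(mk k)) - ∫ p, g p ∂m| < ε / 5 := by
    have := hN₁ k hk1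
    rwa [Real.dist_eq] at this
  -- Term 4: |∫ g dm - ∫ G dm| ≤ ε/5
  have T4 : |(∫ p, g p ∂m) - ∫ p, G p ∂m| ≤ ε / 5 := by
    have := aux_int_diff m (hgint m) (hGint m) hgeq
      (fun p => by rw [abs_sub_comm]; exact hbnd p)
    refine le_trans this ?_
    have h2 := hνsc m hprojm
    calc 2 * C * (m sᶜ).toReal ≤ (2 * C + 1) * (ε / 5 / (2 * C + 1)) := by
          apply mul_le_mul (by linarith) h2 ENNReal.toReal_nonneg (by linarith)
      _ = ε / 5 := by field_simp
  -- combine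
  rw [Real.dist_eq]
  have : |(∫ p, ψ (p.1, hk k p.1 p.2) ∂(mk k)) - ∫ p, G p ∂m| ≤
      |(∫ p, ψ (p.1, hk k p.1 p.2) ∂(mk k)) - ∫ p, G p ∂(mk k)|
      + |(∫ p, G p ∂(mk k)) - ∫ p, g p ∂(mk k)|
      + |(∫ p, g p ∂(mk k)) - ∫ p, g p ∂m|
      + |(∫ p, g p ∂m) - ∫ p, G p ∂m| := by
    have := abs_sub_le (∫ p, ψ (p.1, hk k p.1 p.2) ∂(mk k)) (∫ p, g p ∂m) (∫ p, G p ∂m)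
    have h2 := abs_sub_le (∫ p, ψ (p.1, hk k p.1 p.2) ∂(mk k))
      (∫ p, g p ∂(mk k)) (∫ p, g p ∂m)
    have h3 := abs_sub_le (∫ p, ψ (p.1, hk k p.1 p.2) ∂(mk k))
      (∫ p, G p ∂(mk k)) (∫ p, g p ∂(mk k))
    linarith
  calc |(∫ p, ψ (p.1, hk k p.1 p.2) ∂(mk k)) - ∫ p, G p ∂m| ≤ _ := this
    _ < ε := by linarith
end

section
/- Let M, E be compact metric spaces, μ a Borel probability measure on M, and mᵏ, m Borel probability measures on M × E with projection μ, mᵏ → m weak*, and disintegrations x ↦ mᵏ_x, x ↦ m_x. Let B₀ be a sub-σ-algebra of the Borel σ-algebra of M. If for every k and every continuous φ : E → ℝ the map x ↦ ∫ φ dmᵏ_x is (a.e. equal to) a B₀-measurable function, then for every continuous φ : E → ℝ the map x ↦ ∫ φ dm_x is a.e. equal to a B₀-measurable function. -/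
open MeasureTheory Filter

/-- If `mᵏ → m` weak*, all projecting to `μ`, and for every `k` the fiber
integrals `x ↦ ∫ φ dmᵏ_x` are a.e. `B₀`-measurable, then so are the fiber
integrals of the limit `m`. -/
theorem stmt_7 {M E : Type*} [MetricSpace M] [CompactSpace M]
    [MetricSpace E] [CompactSpace E]
    [mM : MeasurableSpace M] [BorelSpace M] [MeasurableSpace E] [BorelSpace E]
    (μ : Measure M) [IsProbabilityMeasure μ]
    (mk : ℕ → Measure (M × E)) (m : Measure (M × E))
    [∀ k, IsProbabilityMeasure (mk k)] [IsProbabilityMeasure m]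
    (hproj : ∀ k, (mk k).map Prod.fst = μ) (hprojm : m.map Prod.fst = μ)
    (hweak : ∀ ψ : C(M × E, ℝ),
      Tendsto (fun k => ∫ p, ψ p ∂(mk k)) atTop (nhds (∫ p, ψ p ∂m)))
    (mkx : ℕ → M → Measure E) (mx : M → Measure E)
    (hmkx : ∀ k, Measurable (mkx k)) (hmx : Measurable mx)
    (hkprob : ∀ k x, IsProbabilityMeasure (mkx k x))
    (hprob : ∀ x, IsProbabilityMeasure (mx x))
    (hdisintk : ∀ k (ρ : M → ℝ), Measurable ρ → (∃ C, ∀ x, |ρ x| ≤ C) →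
      ∀ φ : C(E, ℝ),
        ∫ p, ρ p.1 * φ p.2 ∂(mk k) = ∫ x, ρ x * ∫ v, φ v ∂(mkx k x) ∂μ)
    (hdisint : ∀ ρ : M → ℝ, Measurable ρ → (∃ C, ∀ x, |ρ x| ≤ C) →
      ∀ φ : C(E, ℝ),
        ∫ p, ρ p.1 * φ p.2 ∂m = ∫ x, ρ x * ∫ v, φ v ∂(mx x) ∂μ)
    (B0 : MeasurableSpace M) (hB0 : B0 ≤ mM)
    (hB0meas : ∀ k, ∀ φ : C(E, ℝ), ∃ g : M → ℝ, Measurable[B0] g ∧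
      ∀ᵐ x ∂μ, g x = ∫ v, φ v ∂(mkx k x)) :
    ∀ φ : C(E, ℝ), ∃ g : M → ℝ, Measurable[B0] g ∧
      ∀ᵐ x ∂μ, g x = ∫ v, φ v ∂(mx x) := by
  intro φ
  letI : MeasurableSpace M := mM
  haveI : SigmaFinite (μ.trim hB0) := by
    haveI := isFiniteMeasure_trim (μ := μ) hB0
    infer_instance
  set C : ℝ := ‖φ‖ with hCdef
  have hCnn : 0 ≤ C := norm_nonneg _
  have hφb : ∀ v, |φ v| ≤ C := fun v => φ.norm_coe_le_norm v
  set F : M → ℝ := fun x => ∫ v, φ v ∂(mx x) with hFdef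
  set Fk : ℕ → M → ℝ := fun k x => ∫ v, φ v ∂(mkx k x) with hFkdef
  -- measurability of fiber integrals
  have measOf : ∀ (ν : M → Measure E), Measurable ν → (∀ x, IsProbabilityMeasure (ν x)) →
      Measurable (fun x => ∫ v, φ v ∂(ν x)) := by
    intro ν hν hνp
    let κ : ProbabilityTheory.Kernel M E := ⟨ν, hν⟩
    haveI : ProbabilityTheory.IsMarkovKernel κ := ⟨fun x => hνp x⟩
    have h : StronglyMeasurable (Function.uncurry fun (_ : M) (v : E) => φ v) :=
      (φ.continuous.comp continuous_snd).stronglyMeasurable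
    exact (h.integral_kernel_prod_right (κ := κ)).measurable
  have measF : Measurable F := measOf mx hmx hprob
  have measFk : ∀ k, Measurable (Fk k) := fun k => measOf (mkx k) (hmkx k) (hkprob k)
  -- bounds
  have bndOf : ∀ (ν : Measure E), IsProbabilityMeasure ν → |∫ v, φ v ∂ν| ≤ C := by
    intro ν hνp
    rw [← Real.norm_eq_abs]
    calc ‖∫ v, φ v ∂ν‖ ≤ C * (ν Set.univ).toReal :=
          norm_integral_le_of_norm_le_const (Eventually.of_forall fun v => by
            rw [Real.norm_eq_abs]; exact hφb v)
      _ = C := by simp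
  have hFbd : ∀ x, |F x| ≤ C := fun x => bndOf (mx x) (hprob x)
  have hFkbd : ∀ k x, |Fk k x| ≤ C := fun k x => bndOf (mkx k x) (hkprob k x)
  -- integrability of bounded measurable functions
  have intBdd : ∀ (h : M → ℝ) (D : ℝ), Measurable h → (∀ x, |h x| ≤ D) → Integrable h μ := by
    intro h D hm hb
    refine ⟨hm.aestronglyMeasurable, HasFiniteIntegral.of_bounded (C := D) ?_⟩
    exact Eventually.of_forall fun x => by rw [Real.norm_eq_abs]; exact hb x
  have intF : Integrable F μ := intBdd F C measF hFbd
  have intFk : ∀ k, Integrable (Fk k) μ := fun k => intBdd (Fk k) C (measFk k) (hFkbd k)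
  -- Step B : convergence against continuous test functions
  have stepB : ∀ ρ : C(M, ℝ), Tendsto (fun k => ∫ x, ρ x * Fk k x ∂μ) atTop
      (nhds (∫ x, ρ x * F x ∂μ)) := by
    intro ρ
    have hρm : Measurable ρ := ρ.continuous.measurable
    have hρbd : ∃ C', ∀ x, |(ρ : M → ℝ) x| ≤ C' := ⟨‖ρ‖, fun x => ρ.norm_coe_le_norm x⟩
    have h1 : ∀ k, ∫ x, ρ x * Fk k x ∂μ = ∫ p, ρ p.1 * φ p.2 ∂(mk k) := fun k =>
      (hdisintk k ρ hρm hρbd φ).symm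
    have h2 : ∫ x, ρ x * F x ∂μ = ∫ p, ρ p.1 * φ p.2 ∂m := (hdisint ρ hρm hρbd φ).symm
    simp_rw [h1, h2]
    exact hweak ⟨fun p => ρ p.1 * φ p.2,
      (ρ.continuous.comp continuous_fst).mul (φ.continuous.comp continuous_snd)⟩
  -- the L¹-approximation estimate
  have key : ∀ (σ ρ : M → ℝ) (G : M → ℝ) (δ : ℝ), Integrable σ μ → Integrable ρ μ →
      Measurable G → (∀ x, |G x| ≤ C) → (∫ x, ‖σ x - ρ x‖ ∂μ) ≤ δ →
      |(∫ x, σ x * G x ∂μ) - ∫ x, ρ x * G x ∂μ| ≤ C * δ := by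
    intro σ ρ G δ hσ hρ hGm hGb hδ
    have hGbd : ∃ C', ∀ x, ‖G x‖ ≤ C' := ⟨C, fun x => by rw [Real.norm_eq_abs]; exact hGb x⟩
    have hσG : Integrable (fun x => σ x * G x) μ := by
      have := hσ.bdd_mul (hGm.aestronglyMeasurable) (Eventually.of_forall hGbd.choose_spec)
      simpa [mul_comm] using this
    have hρG : Integrable (fun x => ρ x * G x) μ := by
      have := hρ.bdd_mul (hGm.aestronglyMeasurable) (Eventually.of_forall hGbd.choose_spec)
      simpa [mul_comm] using this
    rw [← integral_sub hσG hρG]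
    calc |∫ x, (σ x * G x - ρ x * G x) ∂μ| ≤ ∫ x, |σ x * G x - ρ x * G x| ∂μ := by
          rw [← Real.norm_eq_abs]
          exact (norm_integral_le_integral_norm _)
      _ ≤ ∫ x, ‖σ x - ρ x‖ * C ∂μ := by
          refine integral_mono (hσG.sub hρG).abs ((hσ.sub hρ).norm.mul_const C) (fun x => ?_)
          rw [← sub_mul, abs_mul, Real.norm_eq_abs]
          exact mul_le_mul_of_nonneg_left (hGb x) (abs_nonneg _)
      _ = (∫ x, ‖σ x - ρ x‖ ∂μ) * C := integral_mul_const _ _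
      _ ≤ δ * C := by
          refine mul_le_mul_of_nonneg_right hδ hCnn
      _ = C * δ := mul_comm _ _
  -- Step L : convergence against integrable test functions
  have stepL : ∀ σ : M → ℝ, Integrable σ μ →
      Tendsto (fun k => ∫ x, σ x * Fk k x ∂μ) atTop (nhds (∫ x, σ x * F x ∂μ)) := by
    intro σ hσ
    rw [Metric.tendsto_atTop]
    intro ε hε
    have hδpos : 0 < ε / (4 * (C + 1)) := by positivity
    obtain ⟨ρ, hρ1, hρint⟩ := hσ.exists_boundedContinuous_integral_sub_le hδpos
    have hcont := stepB ρ.toContinuousMap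
    rw [Metric.tendsto_atTop] at hcont
    obtain ⟨N, hN⟩ := hcont (ε / 2) (by positivity)
    refine ⟨N, fun k hk => ?_⟩
    have hNk := hN k hk
    rw [Real.dist_eq] at hNk ⊢
    have e1 := key σ ρ (Fk k) _ hσ hρint (measFk k) (hFkbd k) hρ1
    have e2 := key σ ρ F _ hσ hρint measF hFbd hρ1
    have hhalf : C * (ε / (4 * (C + 1))) < ε / 4 := by
      rw [← mul_div_assoc, div_lt_div_iff₀ (by positivity) (by norm_num)]
      nlinarith
    have hcoe : ∀ x, (ρ.toContinuousMap : M → ℝ) x = ρ x := fun x => rfl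
    simp_rw [hcoe] at hNk
    calc |(∫ x, σ x * Fk k x ∂μ) - ∫ x, σ x * F x ∂μ|
        ≤ |(∫ x, σ x * Fk k x ∂μ) - ∫ x, ρ x * Fk k x ∂μ|
          + |(∫ x, ρ x * Fk k x ∂μ) - ∫ x, ρ x * F x ∂μ|
          + |(∫ x, ρ x * F x ∂μ) - ∫ x, σ x * F x ∂μ| := by
          have := abs_sub_le (∫ x, σ x * Fk k x ∂μ) (∫ x, ρ x * F x ∂μ) (∫ x, σ x * F x ∂μ)
          have h2 := abs_sub_le (∫ x, σ x * Fk k x ∂μ) (∫ x, ρ x * Fk k x ∂μ)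
            (∫ x, ρ x * F x ∂μ)
          linarith
      _ < ε / 4 + ε / 2 + ε / 4 := by
          have e2' : |(∫ x, ρ x * F x ∂μ) - ∫ x, σ x * F x ∂μ| ≤ C * (ε / (4 * (C + 1))) := by
            rw [abs_sub_comm]; exact e2
          have : |(∫ x, ρ x * Fk k x ∂μ) - ∫ x, ρ x * F x ∂μ| < ε / 2 := hNk
          have h1 := lt_of_le_of_lt e1 hhalf
          have h3 := lt_of_le_of_lt e2' hhalf
          linarith
      _ = ε := by ring
  -- pull-out property of conditional expectation (integral form)
  have stepD : ∀ (h g : M → ℝ) (c : ℝ), AEStronglyMeasurable[B0] h μ →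
      AEStronglyMeasurable h μ → (∀ᵐ x ∂μ, ‖h x‖ ≤ c) → Integrable g μ →
      ∫ x, h x * g x ∂μ = ∫ x, h x * (μ[g|B0]) x ∂μ := by
    intro h g c hhB0 hhm hbd hg
    have hint : Integrable (fun x => h x * g x) μ := hg.bdd_mul hhm hbd
    have hpull : μ[h * g|B0] =ᵐ[μ] h * μ[g|B0] :=
      condExp_stronglyMeasurable_mul_of_bound₀ hB0 hhB0 hg c hbd
    calc ∫ x, h x * g x ∂μ = ∫ x, (μ[h * g|B0]) x ∂μ := (integral_condExp hB0).symm
      _ = ∫ x, (h * μ[g|B0]) x ∂μ := integral_congr_ae hpull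
      _ = ∫ x, h x * (μ[g|B0]) x ∂μ := rfl
  set g : M → ℝ := μ[F|B0] with hgdef
  have hgB0 : StronglyMeasurable[B0] g := stronglyMeasurable_condExp
  have hgmeas : Measurable g := (hgB0.measurable).mono hB0 le_rfl
  have hgbd : ∀ᵐ x ∂μ, |g x| ≤ C := by
    have : ∀ᵐ x ∂μ, |F x| ≤ (⟨C, hCnn⟩ : NNReal) := Eventually.of_forall fun x => hFbd x
    exact ae_bdd_condExp_of_ae_bdd (m := B0) this
  -- vanishing of ∫ ρ (F - g) for bounded continuous ρ
  have vanish : ∀ ρ : BoundedContinuousFunction M ℝ, ∫ x, ρ x * (F x - g x) ∂μ = 0 := by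
    intro ρ
    have hρm : Measurable ρ := ρ.continuous.measurable
    have hρbd : ∀ x, |(ρ : M → ℝ) x| ≤ ‖ρ‖ := fun x => by
      rw [← Real.norm_eq_abs]; exact ρ.norm_coe_le_norm x
    have hρint : Integrable (⇑ρ) μ := intBdd ρ ‖ρ‖ hρm hρbd
    have hcρ : StronglyMeasurable[B0] (μ[⇑ρ|B0]) := stronglyMeasurable_condExp
    have hcρm : Measurable (μ[⇑ρ|B0]) := hcρ.measurable.mono hB0 le_rfl
    have hcρbd : ∀ᵐ x ∂μ, ‖(μ[⇑ρ|B0]) x‖ ≤ ((⟨‖ρ‖, norm_nonneg ρ⟩ : NNReal) : ℝ) := by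
      have : ∀ᵐ x ∂μ, |(ρ : M → ℝ) x| ≤ ((⟨‖ρ‖, norm_nonneg ρ⟩ : NNReal) : ℝ) :=
        Eventually.of_forall fun x => hρbd x
      exact ae_bdd_condExp_of_ae_bdd (m := B0) this
    have hcρint : Integrable (μ[⇑ρ|B0]) μ := integrable_condExp
    -- ∫ ρ Fk = ∫ μ[ρ|B0] Fk for each k
    have e1 : ∀ k, ∫ x, ρ x * Fk k x ∂μ = ∫ x, (μ[⇑ρ|B0]) x * Fk k x ∂μ := by
      intro k
      obtain ⟨gk, hgkB0, hgkeq⟩ := hB0meas k φ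
      have hFkB0 : AEStronglyMeasurable[B0] (Fk k) μ := by
        refine ⟨gk, ?_, ?_⟩
        · exact hgkB0.stronglyMeasurable
        · filter_upwards [hgkeq] with x hx using hx.symm
      have hFkbd' : ∀ᵐ x ∂μ, ‖Fk k x‖ ≤ C :=
        Eventually.of_forall fun x => by rw [Real.norm_eq_abs]; exact hFkbd k x
      calc ∫ x, ρ x * Fk k x ∂μ = ∫ x, Fk k x * ρ x ∂μ := by simp_rw [mul_comm]
        _ = ∫ x, Fk k x * (μ[⇑ρ|B0]) x ∂μ :=
            stepD (Fk k) ρ C hFkB0 (measFk k).aestronglyMeasurable hFkbd' hρint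
        _ = ∫ x, (μ[⇑ρ|B0]) x * Fk k x ∂μ := by simp_rw [mul_comm]
    -- ∫ ρ F = ∫ μ[ρ|B0] F
    have t1 := stepL (⇑ρ) hρint
    have t2 := stepL (μ[⇑ρ|B0]) hcρint
    have t1' : Tendsto (fun k => ∫ x, ρ x * Fk k x ∂μ) atTop
        (nhds (∫ x, (μ[⇑ρ|B0]) x * F x ∂μ)) := by
      have : (fun k => ∫ x, ρ x * Fk k x ∂μ)
          = fun k => ∫ x, (μ[⇑ρ|B0]) x * Fk k x ∂μ := funext e1
      rw [this]; exact t2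
    have e2 : ∫ x, ρ x * F x ∂μ = ∫ x, (μ[⇑ρ|B0]) x * F x ∂μ :=
      tendsto_nhds_unique t1 t1'
    -- ∫ μ[ρ|B0] F = ∫ μ[ρ|B0] μ[F|B0]
    have hcρB0 : AEStronglyMeasurable[B0] (μ[⇑ρ|B0]) μ :=
      ⟨μ[⇑ρ|B0], hcρ, EventuallyEq.rfl⟩
    have e3 : ∫ x, (μ[⇑ρ|B0]) x * F x ∂μ = ∫ x, (μ[⇑ρ|B0]) x * g x ∂μ :=
      stepD (μ[⇑ρ|B0]) F _ hcρB0 hcρm.aestronglyMeasurable hcρbd intF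
    -- ∫ ρ g = ∫ μ[ρ|B0] g  (pull out g)
    have hgB0' : AEStronglyMeasurable[B0] g μ := ⟨g, hgB0, EventuallyEq.rfl⟩
    have hgbd' : ∀ᵐ x ∂μ, ‖g x‖ ≤ C := by
      filter_upwards [hgbd] with x hx using by rwa [Real.norm_eq_abs]
    have e4 : ∫ x, ρ x * g x ∂μ = ∫ x, (μ[⇑ρ|B0]) x * g x ∂μ := by
      calc ∫ x, ρ x * g x ∂μ = ∫ x, g x * ρ x ∂μ := by simp_rw [mul_comm]
        _ = ∫ x, g x * (μ[⇑ρ|B0]) x ∂μ :=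
            stepD g ρ C hgB0' hgmeas.aestronglyMeasurable hgbd' hρint
        _ = ∫ x, (μ[⇑ρ|B0]) x * g x ∂μ := by simp_rw [mul_comm]
    have hgint : Integrable g μ := integrable_condExp
    have hρF : Integrable (fun x => ρ x * F x) μ := by
      have := hρint.bdd_mul (measF.aestronglyMeasurable)
        (Eventually.of_forall fun x => by rw [Real.norm_eq_abs]; exact hFbd x)
      simpa [mul_comm] using this
    have hρg : Integrable (fun x => ρ x * g x) μ := by
      have := hgint.bdd_mul (hρm.aestronglyMeasurable)
        (Eventually.of_forall fun x => by rw [Real.norm_eq_abs]; exact hρbd x)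
      exact this
    have : ∫ x, ρ x * F x ∂μ = ∫ x, ρ x * g x ∂μ := by rw [e2, e3, ← e4]
    simp_rw [mul_sub]
    rw [integral_sub hρF hρg, this, sub_self]
  -- sign trick : F = g a.e.
  set f : M → ℝ := fun x => F x - g x with hfdef
  have hfmeas : Measurable f := measF.sub hgmeas
  have hfint : Integrable f μ := intF.sub integrable_condExp
  have hfbd : ∀ᵐ x ∂μ, |f x| ≤ 2 * C := by
    filter_upwards [hgbd] with x hx
    calc |F x - g x| ≤ |F x| + |g x| := abs_sub _ _
      _ ≤ C + C := add_le_add (hFbd x) hx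
      _ = 2 * C := by ring
  set σ : M → ℝ := fun x => if 0 ≤ f x then 1 else -1 with hσdef
  have hσmeas : Measurable σ :=
    Measurable.ite (measurableSet_le measurable_const hfmeas) measurable_const measurable_const
  have hσbd : ∀ x, |σ x| ≤ 1 := by
    intro x; by_cases h : 0 ≤ f x <;> simp [hσdef, h]
  have hσint : Integrable σ μ := intBdd σ 1 hσmeas hσbd
  have hσf : ∀ x, σ x * f x = |f x| := by
    intro x
    by_cases h : 0 ≤ f x
    · simp [hσdef, h, abs_of_nonneg h]
    · push_neg at h
      simp [hσdef, not_le.mpr h, abs_of_neg h]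
  have habs : ∫ x, |f x| ∂μ = ∫ x, σ x * f x ∂μ := by
    refine integral_congr_ae (Eventually.of_forall fun x => (hσf x).symm)
  have hle : ∀ ε : ℝ, 0 < ε → (∫ x, |f x| ∂μ) ≤ (2 * C + 1) * ε := by
    intro ε hε
    obtain ⟨ρ, hρ1, hρint⟩ := hσint.exists_boundedContinuous_integral_sub_le hε
    have hσfint : Integrable (fun x => σ x * f x) μ := by
      have := hfint.bdd_mul (hσmeas.aestronglyMeasurable)
        (Eventually.of_forall fun x => by rw [Real.norm_eq_abs]; exact hσbd x)
      exact this
    have hρf : Integrable (fun x => ρ x * f x) μ := by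
      have := hfint.bdd_mul (ρ.continuous.measurable.aestronglyMeasurable)
        (Eventually.of_forall fun x => ρ.norm_coe_le_norm x)
      exact this
    have hsplit : |(∫ x, σ x * f x ∂μ) - ∫ x, ρ x * f x ∂μ| ≤ (2 * C + 1) * ε := by
      rw [← integral_sub hσfint hρf]
      calc |∫ x, (σ x * f x - ρ x * f x) ∂μ| ≤ ∫ x, |σ x * f x - ρ x * f x| ∂μ := by
            rw [← Real.norm_eq_abs]; exact norm_integral_le_integral_norm _
        _ ≤ ∫ x, ‖σ x - ρ x‖ * (2 * C + 1) ∂μ := by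
            refine integral_mono_ae (hσfint.sub hρf).abs
              ((hσint.sub hρint).norm.mul_const _) ?_
            filter_upwards [hfbd] with x hx
            rw [← sub_mul, abs_mul, Real.norm_eq_abs]
            refine mul_le_mul_of_nonneg_left ?_ (abs_nonneg _)
            linarith
        _ = (∫ x, ‖σ x - ρ x‖ ∂μ) * (2 * C + 1) := integral_mul_const _ _
        _ ≤ ε * (2 * C + 1) := by
            refine mul_le_mul_of_nonneg_right hρ1 (by linarith)
        _ = (2 * C + 1) * ε := mul_comm _ _
    have hρ0 : ∫ x, ρ x * f x ∂μ = 0 := vanish ρ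
    rw [habs]
    have : |∫ x, σ x * f x ∂μ| ≤ (2 * C + 1) * ε := by
      have := hsplit
      rwa [hρ0, sub_zero] at this
    exact (le_abs_self _).trans this
  have hzero : ∫ x, |f x| ∂μ = 0 := by
    have hnn : 0 ≤ ∫ x, |f x| ∂μ :=
      integral_nonneg fun x => abs_nonneg _
    have hle0 : (∫ x, |f x| ∂μ) ≤ 0 := by
      refine le_of_forall_pos_le_add fun ε hε => ?_
      have := hle (ε / (2 * C + 1)) (by positivity)
      have h2 : (2 * C + 1) * (ε / (2 * C + 1)) = ε := by field_simp
      rw [h2] at this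
      linarith
    linarith
  have hfzero : f =ᵐ[μ] 0 := by
    have : (fun x => |f x|) =ᵐ[μ] 0 :=
      (integral_eq_zero_iff_of_nonneg (fun x => abs_nonneg _) hfint.abs).mp hzero
    filter_upwards [this] with x hx
    have : |f x| = 0 := hx
    simpa [abs_eq_zero] using this
  refine ⟨g, hgB0.measurable, ?_⟩
  filter_upwards [hfzero] with x hx
  have : F x - g x = 0 := hx
  have : F x = g x := by linarith
  simp [hFdef] at this ⊢
  exact this.symm
end

section
/- Let M, E be compact metric spaces, μ a Borel probability measure on M, and mᵏ, m Borel probability measures on M × E with common projection μ such that mᵏ → m weak*. Then for every ρ ∈ L²(μ) and every continuous φ : E → ℝ, ∫_{M×E} ρ(x)φ(v) dmᵏ(x,v) → ∫_{M×E} ρ(x)φ(v) dm(x,v). -/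
open MeasureTheory Filter

/-- Weak* convergence with common projection gives convergence of integrals of
product functions `ρ(x)φ(v)` with `ρ ∈ L²(μ)` and `φ` continuous. -/
theorem stmt_8 {M E : Type*} [MetricSpace M] [CompactSpace M]
    [MetricSpace E] [CompactSpace E]
    [MeasurableSpace M] [BorelSpace M] [MeasurableSpace E] [BorelSpace E]
    (μ : Measure M) [IsProbabilityMeasure μ]
    (mk : ℕ → Measure (M × E)) (m : Measure (M × E))
    [∀ k, IsProbabilityMeasure (mk k)] [IsProbabilityMeasure m]
    (hproj : ∀ k, (mk k).map Prod.fst = μ) (hprojm : m.map Prod.fst = μ)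
    (hweak : ∀ ψ : C(M × E, ℝ),
      Tendsto (fun k => ∫ p, ψ p ∂(mk k)) atTop (nhds (∫ p, ψ p ∂m))) :
    ∀ (ρ : Lp ℝ 2 μ) (φ : C(E, ℝ)),
      Tendsto (fun k => ∫ p, ρ p.1 * φ p.2 ∂(mk k)) atTop
        (nhds (∫ p, ρ p.1 * φ p.2 ∂m)) := by
  intro ρ φ
  have hρm : AEStronglyMeasurable (fun x => (ρ : M → ℝ) x) μ := Lp.aestronglyMeasurable ρ
  have hρint : Integrable (fun x => (ρ : M → ℝ) x) μ :=
    (Lp.memLp ρ).integrable one_le_two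
  rw [Metric.tendsto_atTop]
  intro ε hε
  set C : ℝ := ‖φ‖ with hC
  have hC0 : 0 ≤ C := norm_nonneg _
  have hδ0 : 0 < ε / (4 * (C + 1)) := by positivity
  obtain ⟨g, hg, hgint⟩ := hρint.exists_boundedContinuous_integral_sub_le hδ0
  have hCδ : C * (ε / (4 * (C + 1))) ≤ ε / 4 := by
    rw [← mul_div_assoc, div_le_div_iff₀ (by positivity) (by norm_num)]
    nlinarith
  -- key estimate for any probability measure with projection μ
  have key : ∀ (ν : Measure (M × E)), IsProbabilityMeasure ν → ν.map Prod.fst = μ →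
      |∫ p, (ρ : M → ℝ) p.1 * φ p.2 ∂ν - ∫ p, g p.1 * φ p.2 ∂ν| ≤ ε / 4 := by
    intro ν hν hmap
    haveI := hν
    have hfst : AEMeasurable (Prod.fst : M × E → M) ν := measurable_fst.aemeasurable
    have hρν : Integrable (fun p : M × E => (ρ : M → ℝ) p.1) ν := by
      have h1 : AEStronglyMeasurable (fun x => (ρ : M → ℝ) x) (ν.map Prod.fst) := by
        rw [hmap]; exact hρm
      have h2 : Integrable (fun x => (ρ : M → ℝ) x) (ν.map Prod.fst) := by
        rw [hmap]; exact hρint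
      exact (integrable_map_measure h1 hfst).mp h2
    have hgν : Integrable (fun p : M × E => g p.1) ν :=
      (g.compContinuous ⟨Prod.fst, continuous_fst⟩).integrable ν
    have hφbd : ∀ v : E, |φ v| ≤ C := fun v => φ.norm_coe_le_norm v
    have hφm : AEStronglyMeasurable (fun p : M × E => φ p.2) ν :=
      (φ.continuous.comp continuous_snd).aestronglyMeasurable
    have hρφ : Integrable (fun p : M × E => (ρ : M → ℝ) p.1 * φ p.2) ν := by
      have := hρν.bdd_mul hφm (c := C) (Eventually.of_forall fun p => hφbd p.2)
      simpa [mul_comm] using this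
    have hgφ : Integrable (fun p : M × E => g p.1 * φ p.2) ν := by
      have := hgν.bdd_mul hφm (c := C) (Eventually.of_forall fun p => hφbd p.2)
      simpa [mul_comm] using this
    have hsub : Integrable (fun p : M × E => ((ρ : M → ℝ) p.1 - g p.1) * φ p.2) ν := by
      have heq : (fun p : M × E => ((ρ : M → ℝ) p.1 - g p.1) * φ p.2)
          = fun p : M × E => (ρ : M → ℝ) p.1 * φ p.2 - g p.1 * φ p.2 := by
        funext p; ring
      rw [heq]; exact hρφ.sub hgφ
    have habs : Integrable (fun p : M × E => |(ρ : M → ℝ) p.1 - g p.1|) ν := (hρν.sub hgν).abs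
    have habsC : Integrable (fun p : M × E => C * |(ρ : M → ℝ) p.1 - g p.1|) ν :=
      habs.const_mul C
    calc |∫ p, (ρ : M → ℝ) p.1 * φ p.2 ∂ν - ∫ p, g p.1 * φ p.2 ∂ν|
        = |∫ p, ((ρ : M → ℝ) p.1 - g p.1) * φ p.2 ∂ν| := by
          rw [← integral_sub hρφ hgφ]
          congr 1
          apply integral_congr_ae
          filter_upwards with p
          ring
      _ ≤ ∫ p, |((ρ : M → ℝ) p.1 - g p.1) * φ p.2| ∂ν := by
          have h := norm_integral_le_integral_norm (μ := ν)
            (fun p : M × E => ((ρ : M → ℝ) p.1 - g p.1) * φ p.2)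
          simp only [Real.norm_eq_abs] at h
          exact h
      _ ≤ ∫ p, C * |(ρ : M → ℝ) p.1 - g p.1| ∂ν := by
          apply integral_mono hsub.abs habsC
          intro p
          show |((ρ : M → ℝ) p.1 - g p.1) * φ p.2| ≤ C * |(ρ : M → ℝ) p.1 - g p.1|
          rw [abs_mul, mul_comm]
          exact mul_le_mul_of_nonneg_right (hφbd p.2) (abs_nonneg _)
      _ = C * ∫ p, |(ρ : M → ℝ) p.1 - g p.1| ∂ν := integral_const_mul C _
      _ = C * ∫ x, |(ρ : M → ℝ) x - g x| ∂μ := by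
          congr 1
          have hm : AEStronglyMeasurable (fun x => |(ρ : M → ℝ) x - g x|) μ := by
            simpa [Real.norm_eq_abs] using
              (hρm.sub g.continuous.aestronglyMeasurable).norm
          have h := integral_map (μ := ν) hfst
            (f := fun x => |(ρ : M → ℝ) x - g x|) (hmap.symm ▸ hm)
          rw [hmap] at h
          exact h.symm
      _ ≤ C * (ε / (4 * (C + 1))) := by
          apply mul_le_mul_of_nonneg_left _ hC0
          calc ∫ x, |(ρ : M → ℝ) x - g x| ∂μ = ∫ x, ‖(ρ : M → ℝ) x - g x‖ ∂μ := by
                simp [Real.norm_eq_abs]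
            _ ≤ ε / (4 * (C + 1)) := hg
      _ ≤ ε / 4 := hCδ
  -- continuous comparison function
  set ψ : C(M × E, ℝ) :=
    ⟨fun p => g p.1 * φ p.2, ((g.continuous.comp continuous_fst).mul
      (φ.continuous.comp continuous_snd))⟩ with hψ
  have hψw := hweak ψ
  rw [Metric.tendsto_atTop] at hψw
  obtain ⟨N, hN⟩ := hψw (ε / 4) (by positivity)
  refine ⟨N, fun n hn => ?_⟩
  have h1 := key (mk n) inferInstance (hproj n)
  have h2 := key m inferInstance hprojm
  have h3 := hN n hn
  have hψk : ∀ ν : Measure (M × E), (∫ p, ψ p ∂ν) = ∫ p, g p.1 * φ p.2 ∂ν := fun ν => rfl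
  rw [Real.dist_eq] at h3 ⊢
  rw [hψk, hψk] at h3
  calc |(∫ p, (ρ : M → ℝ) p.1 * φ p.2 ∂mk n) - ∫ p, (ρ : M → ℝ) p.1 * φ p.2 ∂m|
      ≤ |(∫ p, (ρ : M → ℝ) p.1 * φ p.2 ∂mk n) - ∫ p, g p.1 * φ p.2 ∂mk n|
        + |(∫ p, g p.1 * φ p.2 ∂mk n) - ∫ p, g p.1 * φ p.2 ∂m|
        + |(∫ p, g p.1 * φ p.2 ∂m) - ∫ p, (ρ : M → ℝ) p.1 * φ p.2 ∂m| := by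
        have := abs_sub_le ((∫ p, (ρ : M → ℝ) p.1 * φ p.2 ∂mk n))
          (∫ p, g p.1 * φ p.2 ∂m) (∫ p, (ρ : M → ℝ) p.1 * φ p.2 ∂m)
        have h4 := abs_sub_le ((∫ p, (ρ : M → ℝ) p.1 * φ p.2 ∂mk n))
          (∫ p, g p.1 * φ p.2 ∂mk n) (∫ p, g p.1 * φ p.2 ∂m)
        linarith
    _ < ε := by
        have h2' : |(∫ p, g p.1 * φ p.2 ∂m) - ∫ p, (ρ : M → ℝ) p.1 * φ p.2 ∂m| ≤ ε / 4 := by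
          rw [abs_sub_comm]; exact h2
        linarith
end
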